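/- For every lattice point a ∈ ℤ⁴ (viewed in ℝ⁴) and every permutation (i,j,k,l) of (1,2,3,4), the four slant tetrahedrons T(a;i,j,k), T(a−e_l;l,i,j), T(a+eᵢ;j,k,l) and T(a+eᵢ+eⱼ;k,l,i) have the same image under π, i.e. π(T(a;i,j,k)) = π(T(a−e_l;l,i,j)) = π(T(a+eᵢ;j,k,l)) = π(T(a+eᵢ+eⱼ;k,l,i)), and their gradients {i,j,k}, {l,i,j}, {j,k,l}, {k,l,i} are pairwise distinct (they exhaust all four 3-element subsets of {1,2,3,4}). -/

import Mathlib

noncomputable section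

/-- Ambient space ℝ⁴. -/
abbrev E4 := EuclideanSpace ℝ (Fin 4)

/-- Standard basis vector eᵢ of ℝ⁴. -/
def ee4 (i : Fin 4) : E4 := EuclideanSpace.single i 1

/-- 𝟙 = e₁ + e₂ + e₃ + e₄. -/
def ones4 : E4 := ∑ i, ee4 i

/-- Orthogonal projection π onto the hyperplane H = {v ∈ ℝ⁴ : v₁+v₂+v₃+v₄ = 0},
    given by π(v) = v − ((v₁+v₂+v₃+v₄)/4)·𝟙. -/
def proj4 (v : E4) : E4 := v - ((∑ i, v i) / 4) • ones4

/-- A lattice point of ℤ⁴ viewed in ℝ⁴. -/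
def toE4 (a : Fin 4 → ℤ) : E4 := WithLp.toLp 2 (fun n => (a n : ℝ))

/-- Slant tetrahedron T(a;i,j,k) = conv{a, a+eᵢ, a+eᵢ+eⱼ, a+eᵢ+eⱼ+e_k}. -/
def slant4 (a : Fin 4 → ℤ) (i j k : Fin 4) : Set E4 :=
  convexHull ℝ {toE4 a, toE4 a + ee4 i, toE4 a + ee4 i + ee4 j,
    toE4 a + ee4 i + ee4 j + ee4 k}

/-- Flat tetrahedron: the image π(T(a;i,j,k)). -/
def flat4 (a : Fin 4 → ℤ) (i j k : Fin 4) : Set E4 := proj4 '' slant4 a i j k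


/- ### Auxiliary lemmas -/

lemma proj4_isLinear : IsLinearMap ℝ proj4 := by
  constructor
  · intro x y
    simp only [proj4]
    have h : (∑ i, (x + y) i) = (∑ i, x i) + ∑ i, y i := by
      simp [Finset.sum_add_distrib]
    rw [h, add_div, add_smul]
    abel
  · intro c x
    simp only [proj4]
    have h : (∑ i, (c • x) i) = c * ∑ i, x i := by
      simp [Finset.mul_sum]
    rw [h, smul_sub, mul_div_assoc, mul_smul]

lemma ones4_eq : ones4 = WithLp.toLp 2 (fun _ => (1:ℝ)) := by
  rw [ones4]; ext m
  simp [ee4, EuclideanSpace.single_apply]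

lemma proj4_add_ones (x : E4) : proj4 (x + ones4) = proj4 x := by
  simp only [proj4]
  have h : (∑ i, (x + ones4) i) = (∑ i, x i) + 4 := by
    have : ∀ i : Fin 4, (x + ones4) i = x i + 1 := by
      intro i; rw [ones4_eq]; rfl
    simp only [this, Finset.sum_add_distrib]
    norm_num
  rw [h, add_div, add_smul]
  norm_num

lemma toE4_add_single (a : Fin 4 → ℤ) (i : Fin 4) :
    toE4 (a + Pi.single i 1) = toE4 a + ee4 i := by
  ext n
  simp only [toE4, ee4, Pi.add_apply, PiLp.add_apply, PiLp.toLp_apply, EuclideanSpace.single_apply,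
    Pi.single_apply]
  push_cast
  by_cases h : n = i <;> simp [h]

lemma toE4_sub_single (a : Fin 4 → ℤ) (i : Fin 4) :
    toE4 (a - Pi.single i 1) = toE4 a - ee4 i := by
  ext n
  simp only [toE4, ee4, Pi.sub_apply, PiLp.sub_apply, PiLp.toLp_apply, EuclideanSpace.single_apply,
    Pi.single_apply]
  push_cast
  by_cases h : n = i <;> simp [h]

lemma ee4_sum_eq_ones (i j k l : Fin 4)
    (hij : i ≠ j) (hik : i ≠ k) (hil : i ≠ l)
    (hjk : j ≠ k) (hjl : j ≠ l) (hkl : k ≠ l) :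
    ee4 i + ee4 j + ee4 k + ee4 l = ones4 := by
  have huniv : ({i, j, k, l} : Finset (Fin 4)) = Finset.univ := by
    apply Finset.eq_univ_of_card
    rw [Finset.card_insert_of_notMem (by simp [hij, hik, hil]),
      Finset.card_insert_of_notMem (by simp [hjk, hjl]),
      Finset.card_insert_of_notMem (by simp [hkl])]
    simp
  rw [ones4, ← huniv]
  rw [Finset.sum_insert (by simp [hij, hik, hil]),
    Finset.sum_insert (by simp [hjk, hjl]),
    Finset.sum_insert (by simp [hkl]), Finset.sum_singleton]
  abel

lemma set4_rot (x y z w : E4) : ({x, y, z, w} : Set E4) = {w, x, y, z} := by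
  ext v; simp; tauto

lemma combAux : ∀ i j k l : Fin 4, i ≠ j → i ≠ k → i ≠ l → j ≠ k → j ≠ l → k ≠ l →
    ({i, j, k} : Finset (Fin 4)) ≠ {l, i, j} ∧
    ({i, j, k} : Finset (Fin 4)) ≠ {j, k, l} ∧
    ({i, j, k} : Finset (Fin 4)) ≠ {k, l, i} ∧
    ({l, i, j} : Finset (Fin 4)) ≠ {j, k, l} ∧
    ({l, i, j} : Finset (Fin 4)) ≠ {k, l, i} ∧
    ({j, k, l} : Finset (Fin 4)) ≠ {k, l, i} ∧
    ∀ s : Finset (Fin 4),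
      (s = {i, j, k} ∨ s = {l, i, j} ∨ s = {j, k, l} ∨ s = {k, l, i}) ↔ s.card = 3 := by
  decide


/-- the four slant tetrahedrons T(a;i,j,k), T(a−e_l;l,i,j),
T(a+eᵢ;j,k,l), T(a+eᵢ+eⱼ;k,l,i) have the same image under π, and their
gradients are pairwise distinct, exhausting all four 3-element subsets of
{1,2,3,4}. -/
theorem stmt8 (a : Fin 4 → ℤ) (i j k l : Fin 4)
    (hij : i ≠ j) (hik : i ≠ k) (hil : i ≠ l)
    (hjk : j ≠ k) (hjl : j ≠ l) (hkl : k ≠ l) :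
    flat4 a i j k = flat4 (a - Pi.single l 1) l i j ∧
    flat4 a i j k = flat4 (a + Pi.single i 1) j k l ∧
    flat4 a i j k = flat4 (a + Pi.single i 1 + Pi.single j 1) k l i ∧
    ({i, j, k} : Finset (Fin 4)) ≠ {l, i, j} ∧
    ({i, j, k} : Finset (Fin 4)) ≠ {j, k, l} ∧
    ({i, j, k} : Finset (Fin 4)) ≠ {k, l, i} ∧
    ({l, i, j} : Finset (Fin 4)) ≠ {j, k, l} ∧
    ({l, i, j} : Finset (Fin 4)) ≠ {k, l, i} ∧
    ({j, k, l} : Finset (Fin 4)) ≠ {k, l, i} ∧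
    ({({i, j, k} : Finset (Fin 4)), {l, i, j}, {j, k, l}, {k, l, i}} : Set (Finset (Fin 4))) =
      {s : Finset (Fin 4) | s.card = 3} := by
  obtain ⟨c1, c2, c3, c4, c5, c6, c7⟩ := combAux i j k l hij hik hil hjk hjl hkl
  set A := toE4 a with hA
  have hones : ee4 i + ee4 j + ee4 k + ee4 l = ones4 :=
    ee4_sum_eq_ones i j k l hij hik hil hjk hjl hkl
  -- images of vertex sets
  have himg : ∀ s : Set E4, proj4 '' (convexHull ℝ s) = convexHull ℝ (proj4 '' s) :=
    fun s => proj4_isLinear.image_convexHull s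
  -- key vertex facts
  have key1 : A + ee4 i + ee4 j + ee4 k = (A - ee4 l) + ones4 := by
    rw [← hones]; abel
  have key2 : A + ee4 i + ee4 j + ee4 k + ee4 l = A + ones4 := by
    rw [← hones]; abel
  have p1 : proj4 (A + ee4 i + ee4 j + ee4 k) = proj4 (A - ee4 l) := by
    rw [key1, proj4_add_ones]
  have p2 : proj4 (A + ee4 i + ee4 j + ee4 k + ee4 l) = proj4 A := by
    rw [key2, proj4_add_ones]
  have p3 : proj4 (A + ee4 i + ee4 j + ee4 k + ee4 l + ee4 i) = proj4 (A + ee4 i) := by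
    have : A + ee4 i + ee4 j + ee4 k + ee4 l + ee4 i = (A + ee4 i) + ones4 := by
      rw [← hones]; abel
    rw [this, proj4_add_ones]
  refine ⟨?_, ?_, ?_, c1, c2, c3, c4, c5, c6, ?_⟩
  · -- flat4 a i j k = flat4 (a - e_l) l i j
    rw [flat4, flat4, slant4, slant4, himg, himg, toE4_sub_single, ← hA]
    congr 1
    have e1 : A - ee4 l + ee4 l = A := by abel
    rw [e1]
    rw [Set.image_insert_eq, Set.image_insert_eq, Set.image_insert_eq, Set.image_singleton,
      Set.image_insert_eq, Set.image_insert_eq, Set.image_insert_eq, Set.image_singleton]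
    rw [p1]
    exact set4_rot _ _ _ _
  · -- flat4 a i j k = flat4 (a + e_i) j k l
    rw [flat4, flat4, slant4, slant4, himg, himg, toE4_add_single, ← hA]
    congr 1
    rw [Set.image_insert_eq, Set.image_insert_eq, Set.image_insert_eq, Set.image_singleton,
      Set.image_insert_eq, Set.image_insert_eq, Set.image_insert_eq, Set.image_singleton]
    rw [p2]
    exact (set4_rot _ _ _ _).symm
  · -- flat4 a i j k = flat4 (a + e_i + e_j) k l i
    rw [flat4, flat4, slant4, slant4, himg, himg, toE4_add_single, toE4_add_single, ← hA]
    congr 1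
    rw [Set.image_insert_eq, Set.image_insert_eq, Set.image_insert_eq, Set.image_singleton,
      Set.image_insert_eq, Set.image_insert_eq, Set.image_insert_eq, Set.image_singleton]
    rw [p2, p3]
    rw [set4_rot (proj4 A) (proj4 (A + ee4 i)) (proj4 (A + ee4 i + ee4 j))
      (proj4 (A + ee4 i + ee4 j + ee4 k)),
      set4_rot (proj4 (A + ee4 i + ee4 j + ee4 k)) (proj4 A) (proj4 (A + ee4 i))
      (proj4 (A + ee4 i + ee4 j))]
  · ext s
    simp only [Set.mem_insert_iff, Set.mem_singleton_iff, Set.mem_setOf_eq]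
    exact c7 s
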